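/- Let d ≥ 2 and N ≥ 1 be integers such that d = N + 1 and d is prime. Then for every integer j with 1 ≤ j ≤ N, the integers u_j = ∑_{l=0}^{j−1} (1−d)^l and M̄ = ∑_{l=0}^{N} (1−d)^l are coprime. -/

import Mathlib

/-- For `d = N + 1` prime, each `u_j = ∑_{l<j} (1-d)^l` (for `1 ≤ j ≤ N`) is coprime to
`M̄ = ∑_{l≤N} (1-d)^l`. -/
theorem loop_weights_coprime (d N : ℕ) (hd : 2 ≤ d) (hN : 1 ≤ N) (hdN : d = N + 1)
    (hp : Nat.Prime d) :
    ∀ j : ℕ, 1 ≤ j → j ≤ N →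
      IsCoprime (∑ l ∈ Finset.range j, (1 - (d : ℤ)) ^ l)
        (∑ l ∈ Finset.range (N + 1), (1 - (d : ℤ)) ^ l) := by
  intro j hj1 hjN
  rw [Int.isCoprime_iff_gcd_eq_one]
  by_contra hg
  obtain ⟨p, hpp, hpg⟩ := Nat.exists_prime_and_dvd hg
  have hpu : (p : ℤ) ∣ ∑ l ∈ Finset.range j, (1 - (d : ℤ)) ^ l :=
    (Int.natCast_dvd_natCast.mpr hpg).trans (Int.gcd_dvd_left _ _)
  have hpM : (p : ℤ) ∣ ∑ l ∈ Finset.range (N + 1), (1 - (d : ℤ)) ^ l :=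
    (Int.natCast_dvd_natCast.mpr hpg).trans (Int.gcd_dvd_right _ _)
  -- pass to ZMod p
  set x : ZMod p := 1 - (d : ℕ) with hx
  have hsum : ∀ n : ℕ, ((p : ℤ) ∣ ∑ l ∈ Finset.range n, (1 - (d : ℤ)) ^ l) →
      (∑ l ∈ Finset.range n, x ^ l) = 0 := by
    intro n hn
    have := (ZMod.intCast_zmod_eq_zero_iff_dvd _ p).mpr hn
    push_cast at this
    exact this
  have hsj : (∑ l ∈ Finset.range j, x ^ l) = 0 := hsum j hpu
  have hsN : (∑ l ∈ Finset.range (N + 1), x ^ l) = 0 := hsum (N + 1) hpM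
  have hxj : x ^ j = 1 := by
    have := geom_sum_mul x j
    rw [hsj, zero_mul] at this
    exact sub_eq_zero.mp this.symm
  have hxd : x ^ d = 1 := by
    have := geom_sum_mul x (N + 1)
    rw [hsN, zero_mul] at this
    rw [hdN]
    exact sub_eq_zero.mp this.symm
  have hjd : Nat.Coprime j d := by
    refine Nat.Coprime.symm ((Nat.Prime.coprime_iff_not_dvd hp).mpr ?_)
    intro hdj
    have : d ≤ j := Nat.le_of_dvd hj1 hdj
    omega
  have hx1 : x = 1 := by
    have h1 : orderOf x ∣ j := orderOf_dvd_of_pow_eq_one hxj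
    have h2 : orderOf x ∣ d := orderOf_dvd_of_pow_eq_one hxd
    have : orderOf x ∣ 1 := hjd ▸ Nat.dvd_gcd h1 h2
    exact orderOf_eq_one_iff.mp (Nat.dvd_one.mp this)
  -- then p ∣ d, so p = d
  have hpd : p ∣ d := by
    have : ((d : ℕ) : ZMod p) = 0 := by
      have : (1 : ZMod p) - (d : ℕ) = 1 := hx1
      linear_combination -this
    exact (ZMod.natCast_eq_zero_iff _ _).mp this
  have hped : p = d := ((Nat.prime_dvd_prime_iff_eq hpp hp).mp hpd)
  -- the first sum is ≡ j mod p = d, so d ∣ j: contradiction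
  have hjz : ((j : ℕ) : ZMod p) = 0 := by
    rw [hx1] at hsj
    simpa using hsj
  have : p ∣ j := (ZMod.natCast_eq_zero_iff _ _).mp hjz
  have : d ≤ j := Nat.le_of_dvd hj1 (hped ▸ this)
  omega
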